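/- arXiv:2009.06339 — 6 statements merged into one kernel-verified Lean document; each statement's English description precedes it below -/
import Mathlib

section
/- Fix t_i > 0 and real constants U, W. Define a(t) = (t/t_i)^(2/3), H(t) = a'(t)/a(t), ρ_b(t) = 1/(6π t²), and P(t) = (3/5)[(U t_i + (3/2) W t_i²)(t/t_i)^(2/3) − (U t_i − W t_i²)(t/t_i)^(−1) − (5/2) W t_i²]. Then for all t > 0: P'' + 2H P' − 4π ρ_b P = a(t)^(−3) W, and moreover P(t_i) = 0, P'(t_i) = U, and P''(t_i) = W − 2H(t_i) U. -/
open Real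

lemma rza_pow_hd {t_i : ℝ} (hti : 0 < t_i) (c : ℝ) {t : ℝ} (ht : 0 < t) :
    HasDerivAt (fun s : ℝ => (s / t_i) ^ c) (c * (t / t_i) ^ (c - 1) / t_i) t := by
  have h1 : HasDerivAt (fun s : ℝ => s / t_i) (1 / t_i) t :=
    (hasDerivAt_id t).div_const t_i
  have h2 := (Real.hasDerivAt_rpow_const (x := t / t_i) (p := c)
    (Or.inl (div_pos ht hti).ne')).comp t h1
  rw [show c * (t / t_i) ^ (c - 1) / t_i = c * (t / t_i) ^ (c - 1) * (1 / t_i) by ring]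
  exact h2


/-- The explicit RZA trace solution on an Einstein–de Sitter background:
`P'' + 2H P' - 4π ρ_b P = a⁻³ W` with `P(t_i) = 0`, `P'(t_i) = U` and
`P''(t_i) = W - 2H(t_i) U`. -/
theorem rza_trace_solution_eds (t_i U W : ℝ) (hti : 0 < t_i)
    (a H ρb P : ℝ → ℝ)
    (ha : ∀ t, a t = (t / t_i) ^ ((2 : ℝ) / 3))
    (hH : ∀ t, H t = deriv a t / a t)
    (hρ : ∀ t, ρb t = 1 / (6 * π * t ^ 2))
    (hP : ∀ t, P t = (3 / 5) * ((U * t_i + (3 / 2) * W * t_i ^ 2) * (t / t_i) ^ ((2 : ℝ) / 3)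
      - (U * t_i - W * t_i ^ 2) * (t / t_i) ^ (-1 : ℝ)
      - (5 / 2) * W * t_i ^ 2)) :
    (∀ t > 0, deriv (deriv P) t + 2 * H t * deriv P t - 4 * π * ρb t * P t
        = (a t) ^ (-3 : ℝ) * W) ∧
    P t_i = 0 ∧ deriv P t_i = U ∧ deriv (deriv P) t_i = W - 2 * H t_i * U := by
  set A : ℝ := U * t_i + (3 / 2) * W * t_i ^ 2 with hA
  set B : ℝ := U * t_i - W * t_i ^ 2 with hB
  set Q : ℝ → ℝ := fun t => 3 / 5 *
      (A * ((2 : ℝ) / 3 * (t / t_i) ^ ((2 : ℝ) / 3 - 1) / t_i)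
        - B * ((-1 : ℝ) * (t / t_i) ^ ((-1 : ℝ) - 1) / t_i)) with hQ
  set R : ℝ → ℝ := fun t => 3 / 5 *
      (A * ((2 : ℝ) / 3 * (((2 : ℝ) / 3 - 1) * (t / t_i) ^ ((2 : ℝ) / 3 - 1 - 1) / t_i) / t_i)
        - B * ((-1 : ℝ) * (((-1 : ℝ) - 1) * (t / t_i) ^ ((-1 : ℝ) - 1 - 1) / t_i) / t_i)) with hR
  have hPfun : P = fun t => 3 / 5 * (A * (t / t_i) ^ ((2 : ℝ) / 3)
      - B * (t / t_i) ^ (-1 : ℝ) - 5 / 2 * W * t_i ^ 2) := funext hP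
  have hafun : a = fun t => (t / t_i) ^ ((2 : ℝ) / 3) := funext ha
  -- first derivative of P
  have hPd : ∀ t : ℝ, 0 < t → HasDerivAt P (Q t) t := by
    intro t ht
    rw [hPfun]
    have h1 := (rza_pow_hd hti ((2 : ℝ) / 3) ht).const_mul A
    have h2 := (rza_pow_hd hti (-1 : ℝ) ht).const_mul B
    have h3 := ((h1.sub h2).sub_const (5 / 2 * W * t_i ^ 2)).const_mul (3 / 5 : ℝ)
    exact h3
  -- derivative of Q
  have hQd : ∀ t : ℝ, 0 < t → HasDerivAt Q (R t) t := by
    intro t ht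
    have h1 := ((rza_pow_hd hti ((2 : ℝ) / 3 - 1) ht).const_mul ((2 : ℝ) / 3)).div_const t_i
    have h2 := ((rza_pow_hd hti ((-1 : ℝ) - 1) ht).const_mul ((-1) : ℝ)).div_const t_i
    have h3 := ((h1.const_mul A).sub (h2.const_mul B)).const_mul (3 / 5 : ℝ)
    exact h3
  have hderivP : ∀ t : ℝ, 0 < t → deriv P t = Q t := fun t ht => (hPd t ht).deriv
  have hderiv2 : ∀ t : ℝ, 0 < t → deriv (deriv P) t = R t := by
    intro t ht
    have hev : deriv P =ᶠ[nhds t] Q :=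
      Filter.eventually_of_mem (Ioi_mem_nhds ht) fun s hs => hderivP s hs
    rw [hev.deriv_eq]
    exact (hQd t ht).deriv
  have hda : ∀ t : ℝ, 0 < t →
      deriv a t = (2 : ℝ) / 3 * (t / t_i) ^ ((2 : ℝ) / 3 - 1) / t_i := by
    intro t ht
    rw [hafun]
    exact (rza_pow_hd hti ((2 : ℝ) / 3) ht).deriv
  have hone : t_i / t_i = 1 := div_self hti.ne'
  refine ⟨?_, ?_, ?_, ?_⟩
  · intro t ht
    have hx : (0 : ℝ) < t / t_i := div_pos ht hti
    have hy : (0 : ℝ) < (t / t_i) ^ ((2 : ℝ) / 3) := rpow_pos_of_pos hx _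
    have r1 : (t / t_i) ^ ((2 : ℝ) / 3 - 1) = (t / t_i) ^ ((2 : ℝ) / 3) / (t / t_i) := by
      rw [Real.rpow_sub hx, Real.rpow_one]
    have r2 : (t / t_i) ^ ((2 : ℝ) / 3 - 1 - 1) = (t / t_i) ^ ((2 : ℝ) / 3) / (t / t_i) / (t / t_i) := by
      rw [Real.rpow_sub hx, Real.rpow_sub hx, Real.rpow_one]
    have r3 : (t / t_i) ^ ((-1 : ℝ)) = 1 / (t / t_i) := by
      rw [Real.rpow_neg_one]; exact (one_div _).symm
    have r4 : (t / t_i) ^ ((-1 : ℝ) - 1) = 1 / (t / t_i) / (t / t_i) := by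
      rw [Real.rpow_sub hx, Real.rpow_one, r3]
    have r5 : (t / t_i) ^ ((-1 : ℝ) - 1 - 1) = 1 / (t / t_i) / (t / t_i) / (t / t_i) := by
      rw [Real.rpow_sub hx, Real.rpow_one, r4]
    have r6 : ((t / t_i) ^ ((2 : ℝ) / 3)) ^ ((-3 : ℝ)) = 1 / ((t / t_i) * (t / t_i)) := by
      rw [← Real.rpow_mul hx.le, show (2 : ℝ) / 3 * (-3) = (-2 : ℝ) by norm_num,
        Real.rpow_neg hx.le, show ((2 : ℝ)) = ((2 : ℕ) : ℝ) by norm_num,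
        Real.rpow_natCast, pow_two, one_div]
    rw [hderiv2 t ht, hderivP t ht, hH t, hda t ht, hρ t, hP t, ha t, r6]
    simp only [hR, hQ, r1, r2, r4, r5, r3]
    have hπ : (π : ℝ) ≠ 0 := Real.pi_ne_zero
    field_simp
    ring
  · rw [hP, hone, Real.one_rpow, Real.one_rpow]; ring
  · rw [hderivP t_i hti, hQ]
    simp only [hone, Real.one_rpow]
    field_simp
    ring
  · rw [hderiv2 t_i hti, hR, hH, hda t_i hti, ha, hone, Real.one_rpow]
    field_simp
    ring
end

section
/- Let S : I → ℝ be twice differentiable on an open interval I with S > 0 and S' ≠ 0 on I, satisfying (S')² = −k₀ + 2μ/S + (Λ/3)S². Then f₋ := S'/S satisfies the linear ODE f'' + 2 (S'/S) f' − (3μ/S³) f = 0 on I. -/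
/-- If `S` solves the Friedmann-like equation `(S')² = -k₀ + 2μ/S + (Λ/3)S²`
on an open interval with `S > 0` and `S' ≠ 0`, then `f₋ = S'/S` solves
`f'' + 2(S'/S) f' - (3μ/S³) f = 0`. -/
theorem decaying_mode_solves_perturbation_ode (I : Set ℝ) (hI : IsOpen I)
    (k₀ μ Λ : ℝ) (S S' S'' f f' f'' : ℝ → ℝ)
    (hSpos : ∀ t ∈ I, 0 < S t)
    (hS'ne : ∀ t ∈ I, S' t ≠ 0)
    (hS : ∀ t ∈ I, HasDerivAt S (S' t) t)
    (hS' : ∀ t ∈ I, HasDerivAt S' (S'' t) t)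
    (hfried : ∀ t ∈ I, (S' t) ^ 2 = -k₀ + 2 * μ / S t + (Λ / 3) * (S t) ^ 2)
    (hf : ∀ t ∈ I, f t = S' t / S t)
    (hf' : ∀ t ∈ I, HasDerivAt f (f' t) t)
    (hf'' : ∀ t ∈ I, HasDerivAt f' (f'' t) t) :
    ∀ t ∈ I, f'' t + 2 * (S' t / S t) * f' t - (3 * μ / (S t) ^ 3) * f t = 0 := by
  -- Step 1: S'' = -μ/S² + (Λ/3) S on I
  have hS'' : ∀ t ∈ I, S'' t = -μ / (S t) ^ 2 + (Λ / 3) * S t := by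
    intro t ht
    have hSne := (hSpos t ht).ne'
    have hL : HasDerivAt (fun t => (S' t) ^ 2) (2 * S' t * S'' t) t := by
      have := (hS' t ht).fun_pow 2
      simpa [mul_comm, mul_assoc] using this
    have hR : HasDerivAt (fun t => -k₀ + 2 * μ / S t + (Λ / 3) * (S t) ^ 2)
        ((0 * S t - 2 * μ * S' t) / (S t) ^ 2 + (Λ / 3) * (2 * S t * S' t)) t := by
      have h1 : HasDerivAt (fun t => 2 * μ / S t)
          ((0 * S t - 2 * μ * S' t) / (S t) ^ 2) t :=
        (hasDerivAt_const t (2 * μ)).div (hS t ht) hSne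
      have h2 : HasDerivAt (fun t => (Λ / 3) * (S t) ^ 2)
          ((Λ / 3) * (2 * S t * S' t)) t := by
        have := ((hS t ht).pow 2).const_mul (Λ / 3)
        simpa [mul_comm, mul_assoc] using this
      simpa using ((hasDerivAt_const t (-k₀)).fun_add h1).fun_add h2
    have heq : (fun t => (S' t) ^ 2) =ᶠ[nhds t]
        (fun t => -k₀ + 2 * μ / S t + (Λ / 3) * (S t) ^ 2) :=
      Filter.eventuallyEq_of_mem (hI.mem_nhds ht) hfried
    have : 2 * S' t * S'' t = (0 * S t - 2 * μ * S' t) / (S t) ^ 2 + (Λ / 3) * (2 * S t * S' t) :=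
      hL.unique (hR.congr_of_eventuallyEq heq)
    have hS'ne' := hS'ne t ht
    field_simp at this ⊢
    exact mul_left_cancel₀ hS'ne' (by linear_combination this / 2)
  -- Step 2: f' = -μ/S³ + Λ/3 - f² on I
  have hfp : ∀ t ∈ I, f' t = -μ / (S t) ^ 3 + Λ / 3 - (f t) ^ 2 := by
    intro t ht
    have hSne := (hSpos t ht).ne'
    have hg : HasDerivAt (fun t => S' t / S t)
        ((S'' t * S t - S' t * S' t) / (S t) ^ 2) t :=
      (hS' t ht).div (hS t ht) hSne
    have heq : f =ᶠ[nhds t] (fun t => S' t / S t) :=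
      Filter.eventuallyEq_of_mem (hI.mem_nhds ht) hf
    have h1 : f' t = (S'' t * S t - S' t * S' t) / (S t) ^ 2 :=
      (hf' t ht).unique (hg.congr_of_eventuallyEq heq)
    rw [h1, hS'' t ht, hf t ht]
    field_simp
  -- Step 3: f'' by differentiating Step 2's RHS
  intro t ht
  have hSne := (hSpos t ht).ne'
  have hg : HasDerivAt (fun t => -μ / (S t) ^ 3 + Λ / 3 - (f t) ^ 2)
      ((0 * (S t)^3 - (-μ) * (3 * (S t)^2 * S' t)) / ((S t)^3)^2 + 0 - 2 * f t * f' t) t := by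
    have h1 : HasDerivAt (fun t => -μ / (S t) ^ 3)
        ((0 * (S t)^3 - (-μ) * (3 * (S t)^2 * S' t)) / ((S t)^3)^2) t := by
      have hp : HasDerivAt (fun t => (S t)^3) (3 * (S t)^2 * S' t) t := by
        have := (hS t ht).fun_pow 3
        simpa [mul_comm, mul_assoc] using this
      exact (hasDerivAt_const t (-μ)).div hp (pow_ne_zero 3 hSne)
    have h2 : HasDerivAt (fun t => (f t)^2) (2 * f t * f' t) t := by
      have := (hf' t ht).fun_pow 2
      simpa [mul_comm, mul_assoc] using this
    exact (h1.add (hasDerivAt_const t (Λ / 3))).sub h2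
  have heq : f' =ᶠ[nhds t] (fun t => -μ / (S t) ^ 3 + Λ / 3 - (f t) ^ 2) :=
    Filter.eventuallyEq_of_mem (hI.mem_nhds ht) hfp
  have h2 : f'' t = (0 * (S t)^3 - (-μ) * (3 * (S t)^2 * S' t)) / ((S t)^3)^2 + 0 - 2 * f t * f' t :=
    (hf'' t ht).unique (hg.congr_of_eventuallyEq heq)
  rw [h2, hf t ht]
  field_simp
  ring
end

section
/- Let D be a measure space with finite positive measure weighted average ⟨·⟩ (i.e., ⟨f⟩ = (∫ f J dμ)/(∫ J dμ) for a fixed positive weight J), and let H₀ ∈ ℝ be a constant. Suppose Θ = 3H₀ + θ for a function θ on D, and σ² = (1/3) θ². Then Q := (2/3)(⟨Θ²⟩ − ⟨Θ⟩²) − 2⟨σ²⟩ = −(2/3) ⟨θ⟩². In particular Q ≤ 0, and Q = 0 if and only if ⟨θ⟩ = 0. -/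
open MeasureTheory

/-- For the weighted average `⟨f⟩ = (∫ f J dμ)/(∫ J dμ)` on a finite measure
space, if `Θ = 3H₀ + θ` and `σ² = (1/3)θ²`, then the kinematical backreaction
`Q = (2/3)(⟨Θ²⟩ - ⟨Θ⟩²) - 2⟨σ²⟩` equals `-(2/3)⟨θ⟩²`; in particular `Q ≤ 0`
and `Q = 0 ↔ ⟨θ⟩ = 0`. -/
theorem classII_backreaction_nonpositive
    (α : Type) [MeasureSpace α] [IsFiniteMeasure (volume : Measure α)]
    (hpos : 0 < (volume : Measure α) Set.univ)
    (J θ Θ σsq : α → ℝ) (H₀ : ℝ)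
    (hJpos : ∀ x, 0 < J x)
    (hΘ : ∀ x, Θ x = 3 * H₀ + θ x)
    (hσ : ∀ x, σsq x = (1 / 3) * (θ x) ^ 2)
    (hJint : Integrable J)
    (hθJ : Integrable (fun x => θ x * J x))
    (hθ2J : Integrable (fun x => (θ x) ^ 2 * J x))
    (hJne : (∫ x, J x) ≠ 0)
    (avg : (α → ℝ) → ℝ)
    (havg : ∀ f, avg f = (∫ x, f x * J x) / (∫ x, J x))
    (Q : ℝ)
    (hQ : Q = (2 / 3) * (avg (fun x => (Θ x) ^ 2) - (avg Θ) ^ 2) - 2 * avg σsq) :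
    Q = -(2 / 3) * (avg θ) ^ 2 ∧ Q ≤ 0 ∧ (Q = 0 ↔ avg θ = 0) := by
  set I := ∫ x, J x with hI
  set A := ∫ x, θ x * J x with hA
  set B := ∫ x, (θ x) ^ 2 * J x with hB
  have hΘJ : (∫ x, Θ x * J x) = 3 * H₀ * I + A := by
    have : (fun x => Θ x * J x) = fun x => (3 * H₀) * J x + θ x * J x := by
      funext x; rw [hΘ x]; ring
    rw [this, integral_add (hJint.const_mul _) hθJ, integral_const_mul]
  have hΘ2J : (∫ x, (Θ x) ^ 2 * J x) = 9 * H₀ ^ 2 * I + 6 * H₀ * A + B := by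
    have : (fun x => (Θ x) ^ 2 * J x)
        = fun x => ((9 * H₀ ^ 2) * J x + (6 * H₀) * (θ x * J x)) + (θ x) ^ 2 * J x := by
      funext x; rw [hΘ x]; ring
    have h1 : Integrable (fun x => (9 * H₀ ^ 2) * J x + (6 * H₀) * (θ x * J x)) :=
      (hJint.const_mul _).add (hθJ.const_mul _)
    rw [this, integral_add h1 hθ2J,
      integral_add (hJint.const_mul _) (hθJ.const_mul _), integral_const_mul,
      integral_const_mul]
  have hσJ : (∫ x, σsq x * J x) = (1/3) * B := by
    have : (fun x => σsq x * J x) = fun x => (1/3) * ((θ x) ^ 2 * J x) := by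
      funext x; rw [hσ x]; ring
    rw [this, integral_const_mul]
  have key : Q = -(2 / 3) * (avg θ) ^ 2 := by
    rw [hQ, havg, havg, havg, havg, hΘJ, hΘ2J, hσJ]
    field_simp
    ring
  refine ⟨key, ?_, ?_⟩
  · rw [key]; nlinarith [sq_nonneg (avg θ)]
  · rw [key]
    constructor
    · intro h; nlinarith [sq_nonneg (avg θ)]
    · intro h; rw [h]; ring
end

section
/- Let a : I → ℝ be positive and differentiable, μ ∈ ℝ, and let F, Ã, G : I → ℝ with G = Ã·(1 + P) for P = −(F − F_i)/Ã, where Ã ≠ 0 is constant in time and F is twice differentiable with F̈ + 2(ȧ/a)Ḟ = (3μ/a³) F and G ≠ 0. Then (1/(3(1+P))) · (2(ȧ/a) Ṗ + P̈) = −(μ/a³) · (F/G). -/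
/-- The RZA functional for the gravitoelectric Weyl scalar reproduces the
Szekeres class II expression: with `P = -(F - F_i)/Ã`, `G = Ã(1 + P)`, and
`F` solving `F̈ + 2(ȧ/a)Ḟ = (3μ/a³)F`, one has
`(1/(3(1+P)))(2(ȧ/a)Ṗ + P̈) = -(μ/a³)(F/G)`. -/
theorem psi2_functional_classII (I : Set ℝ) (hI : IsOpen I)
    (μ Atil Fi : ℝ) (hAtil : Atil ≠ 0)
    (a a' F F' F'' : ℝ → ℝ)
    (P Pd Pdd G : ℝ → ℝ)
    (hapos : ∀ t ∈ I, 0 < a t)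
    (ha : ∀ t ∈ I, HasDerivAt a (a' t) t)
    (hF : ∀ t ∈ I, HasDerivAt F (F' t) t)
    (hF' : ∀ t ∈ I, HasDerivAt F' (F'' t) t)
    (hode : ∀ t ∈ I, F'' t + 2 * (a' t / a t) * F' t = (3 * μ / (a t) ^ 3) * F t)
    (hP : ∀ t, P t = -(F t - Fi) / Atil)
    (hPd : ∀ t, Pd t = -(F' t) / Atil)
    (hPdd : ∀ t, Pdd t = -(F'' t) / Atil)
    (hG : ∀ t, G t = Atil * (1 + P t))
    (hGne : ∀ t ∈ I, G t ≠ 0) :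
    ∀ t ∈ I, (1 / (3 * (1 + P t))) * (2 * (a' t / a t) * Pd t + Pdd t)
      = -(μ / (a t) ^ 3) * (F t / G t) := by
  intro t ht
  have hGt := hGne t ht
  have hane : a t ≠ 0 := (hapos t ht).ne'
  have h1P : 1 + P t ≠ 0 := by
    intro h
    apply hGt
    rw [hG, h, mul_zero]
  have hodet := hode t ht
  rw [hPd, hPdd, hG t]
  field_simp
  field_simp at hodet
  linear_combination (-1 : ℝ) * hodet
end

section
/- Let δ : I → ℝ be twice differentiable with 1 + δ > 0 on I, and let H, ρ_b : I → ℝ. Suppose δ satisfies δ̈ + 2H δ̇ − 4π ρ_b δ − (2/(1+δ)) δ̇² − 4π ρ_b δ² = 0 on I. Then Δ := δ/(1+δ) satisfies the linear equation Δ̈ + 2H Δ̇ − 4π ρ_b Δ = 0 on I. -/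
open Real

/-- The nonlinear density-contrast equation for `δ` becomes the linear
equation `Δ̈ + 2H Δ̇ - 4π ρ_b Δ = 0` for `Δ = δ/(1+δ)`. -/
theorem density_contrast_linearizes (I : Set ℝ) (hI : IsOpen I)
    (H ρb δ δ' δ'' Δ Δ' Δ'' : ℝ → ℝ)
    (hpos : ∀ t ∈ I, 0 < 1 + δ t)
    (hδ : ∀ t ∈ I, HasDerivAt δ (δ' t) t)
    (hδ' : ∀ t ∈ I, HasDerivAt δ' (δ'' t) t)
    (hode : ∀ t ∈ I, δ'' t + 2 * H t * δ' t - 4 * π * ρb t * δ t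
      - (2 / (1 + δ t)) * (δ' t) ^ 2 - 4 * π * ρb t * (δ t) ^ 2 = 0)
    (hΔ : ∀ t, Δ t = δ t / (1 + δ t))
    (hΔ' : ∀ t ∈ I, HasDerivAt Δ (Δ' t) t)
    (hΔ'' : ∀ t ∈ I, HasDerivAt Δ' (Δ'' t) t) :
    ∀ t ∈ I, Δ'' t + 2 * H t * Δ' t - 4 * π * ρb t * Δ t = 0 := by
  -- first: Δ' = δ'/(1+δ)^2 on I
  have hΔ'eq : ∀ t ∈ I, Δ' t = δ' t / (1 + δ t) ^ 2 := by
    intro t ht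
    have hne : (1 + δ t) ≠ 0 := (hpos t ht).ne'
    have hden : HasDerivAt (fun s => 1 + δ s) (δ' t) t := by
      exact (hδ t ht).const_add 1
    have h1 : HasDerivAt (fun s => δ s / (1 + δ s))
        ((δ' t * (1 + δ t) - δ t * δ' t) / (1 + δ t) ^ 2) t :=
      (hδ t ht).div hden hne
    have h2 : HasDerivAt Δ ((δ' t * (1 + δ t) - δ t * δ' t) / (1 + δ t) ^ 2) t := by
      have : Δ = fun s => δ s / (1 + δ s) := funext hΔ
      rw [this]; exact h1
    have := (hΔ' t ht).unique h2
    rw [this]; field_simp; ring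
  intro t ht
  have hne : (1 + δ t) ≠ 0 := (hpos t ht).ne'
  have hden : HasDerivAt (fun s => 1 + δ s) (δ' t) t := by
    exact (hδ t ht).const_add 1
  have hden2 : HasDerivAt (fun s => (1 + δ s) ^ 2) (2 * (1 + δ t) ^ 1 * δ' t) t :=
    hden.pow 2
  have hg : HasDerivAt (fun s => δ' s / (1 + δ s) ^ 2)
      ((δ'' t * (1 + δ t) ^ 2 - δ' t * (2 * (1 + δ t) ^ 1 * δ' t)) / ((1 + δ t) ^ 2) ^ 2) t :=
    (hδ' t ht).div hden2 (pow_ne_zero 2 hne)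
  have hEq : Δ' =ᶠ[nhds t] fun s => δ' s / (1 + δ s) ^ 2 := by
    filter_upwards [hI.mem_nhds ht] with s hs using hΔ'eq s hs
  have hΔ''eq : Δ'' t
      = (δ'' t * (1 + δ t) ^ 2 - δ' t * (2 * (1 + δ t) ^ 1 * δ' t)) / ((1 + δ t) ^ 2) ^ 2 :=
    (hΔ'' t ht).unique (hg.congr_of_eventuallyEq hEq)
  rw [hΔ''eq, hΔ'eq t ht, hΔ t]
  have h := hode t ht
  field_simp at h ⊢
  nlinarith [h, sq_nonneg (1 + δ t)]
end

section
/- Let R : ℝ × [0, r_B] → ℝ be C², with R(t, 0) = 0, R > 0 for r > 0, and ∂_r R > 0. Define V(t) = 4π ∫₀^{r_B} R² ∂_r R dr, ⟨I⟩(t) = (4π/V)∫₀^{r_B} ∂_r(∂_t R · R²) dr, and ⟨II⟩(t) = (4π/V)∫₀^{r_B} ∂_r((∂_t R)² R) dr. Assume ∂_t R(t,0) = 0. Then V = (4π/3) R_B³, ⟨I⟩ = 3 (∂_t R)_B / R_B, ⟨II⟩ = 3 ((∂_t R)_B / R_B)², where subscript B denotes evaluation at r = r_B, and consequently the backreaction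 Q_B := 2⟨II⟩ − (2/3)⟨I⟩² = 0. -/
open Real intervalIntegral

/-- Vanishing of kinematical backreaction for parabolic LTB models: the
averaged invariants reduce to boundary terms, `V = (4π/3) R_B³`,
`⟨I⟩ = 3 Ṙ_B/R_B`, `⟨II⟩ = 3 (Ṙ_B/R_B)²`, hence
`Q_B = 2⟨II⟩ - (2/3)⟨I⟩² = 0`. -/
theorem parabolic_ltb_zero_backreaction (rB : ℝ) (hrB : 0 < rB)
    (R Rt Rr : ℝ → ℝ → ℝ) (t : ℝ)
    (hC2 : ContDiff ℝ 2 (fun p : ℝ × ℝ => R p.1 p.2))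
    (hRt : ∀ s r, HasDerivAt (fun u => R u r) (Rt s r) s)
    (hRr : ∀ s r, HasDerivAt (fun ρ => R s ρ) (Rr s r) r)
    (hR0 : R t 0 = 0)
    (hRpos : ∀ r, 0 < r → r ≤ rB → 0 < R t r)
    (hRrpos : ∀ r, 0 ≤ r → r ≤ rB → 0 < Rr t r)
    (hRt0 : Rt t 0 = 0)
    (V aI aII QB : ℝ)
    (hV : V = 4 * π * ∫ r in (0 : ℝ)..rB, (R t r) ^ 2 * Rr t r)
    (haI : aI = (4 * π / V) * ∫ r in (0 : ℝ)..rB, deriv (fun ρ => Rt t ρ * (R t ρ) ^ 2) r)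
    (haII : aII = (4 * π / V) * ∫ r in (0 : ℝ)..rB, deriv (fun ρ => (Rt t ρ) ^ 2 * R t ρ) r)
    (hQB : QB = 2 * aII - (2 / 3) * aI ^ 2) :
    V = (4 * π / 3) * (R t rB) ^ 3 ∧
    aI = 3 * (Rt t rB / R t rB) ∧
    aII = 3 * (Rt t rB / R t rB) ^ 2 ∧
    QB = 0 := by
  set F : ℝ × ℝ → ℝ := fun p => R p.1 p.2 with hF
  have hFdiff : Differentiable ℝ F := hC2.differentiable two_ne_zero
  -- Rt, Rr as fderiv applications
  have hRt_eq : ∀ s r, Rt s r = fderiv ℝ F (s, r) (1, 0) := by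
    intro s r
    have h1 : HasDerivAt (fun u : ℝ => (u, r)) ((1 : ℝ), (0 : ℝ)) s := by
      simpa using ((hasDerivAt_id s).prodMk (hasDerivAt_const s r))
    have h2 : HasDerivAt (fun u => F (u, r)) (fderiv ℝ F (s, r) (1, 0)) s :=
      by have := ((hFdiff (s, r)).hasFDerivAt.comp_hasDerivAt s h1); exact this
    exact (hRt s r).unique h2
  have hRr_eq : ∀ s r, Rr s r = fderiv ℝ F (s, r) (0, 1) := by
    intro s r
    have h1 : HasDerivAt (fun ρ : ℝ => (s, ρ)) ((0 : ℝ), (1 : ℝ)) r := by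
      simpa using ((hasDerivAt_const r s).prodMk (hasDerivAt_id r))
    have h2 : HasDerivAt (fun ρ => F (s, ρ)) (fderiv ℝ F (s, r) (0, 1)) r :=
      by have := ((hFdiff (s, r)).hasFDerivAt.comp_hasDerivAt r h1); exact this
    exact (hRr s r).unique h2
  have hfd : ContDiff ℝ 1 (fun p => fderiv ℝ F p) :=
    (hC2.fderiv_right (le_refl _))
  have hcurve : ContDiff ℝ 1 (fun ρ : ℝ => (t, ρ)) := contDiff_const.prodMk contDiff_id
  have hRtC1 : ContDiff ℝ 1 (fun ρ => Rt t ρ) := by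
    have : ContDiff ℝ 1 (fun ρ : ℝ => fderiv ℝ F (t, ρ) (1, 0)) := by
      exact ((ContinuousLinearMap.apply ℝ ℝ ((1 : ℝ), (0 : ℝ))).contDiff).comp
        (hfd.comp hcurve)
    simpa [← hRt_eq] using this
  have hRrC1 : ContDiff ℝ 1 (fun ρ => Rr t ρ) := by
    have : ContDiff ℝ 1 (fun ρ : ℝ => fderiv ℝ F (t, ρ) (0, 1)) := by
      exact ((ContinuousLinearMap.apply ℝ ℝ ((0 : ℝ), (1 : ℝ))).contDiff).comp
        (hfd.comp hcurve)
    simpa [← hRr_eq] using this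
  have hRC : ContDiff ℝ 2 (fun ρ => R t ρ) := hC2.comp (contDiff_const.prodMk contDiff_id)
  have hRcont : Continuous (fun ρ => R t ρ) := hRC.continuous
  have hRBpos : 0 < R t rB := hRpos rB hrB le_rfl
  have hRBne : R t rB ≠ 0 := hRBpos.ne'
  have hπ : (π : ℝ) ≠ 0 := pi_ne_zero
  -- V
  have hint1 : (∫ r in (0 : ℝ)..rB, (R t r) ^ 2 * Rr t r) = (R t rB) ^ 3 / 3 := by
    have hD : ∀ x ∈ Set.uIcc (0 : ℝ) rB,
        HasDerivAt (fun ρ => (R t ρ) ^ 3 / 3) ((R t x) ^ 2 * Rr t x) x := by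
      intro x _
      have h := ((hRr t x).pow 3).div_const 3
      rw [show (R t x) ^ 2 * Rr t x = ((3 : ℕ) : ℝ) * R t x ^ (3 - 1) * Rr t x / 3 by push_cast; ring]
      exact h
    have hInt : IntervalIntegrable (fun r => (R t r) ^ 2 * Rr t r)
        MeasureTheory.volume 0 rB :=
      ((hRcont.pow 2).mul hRrC1.continuous).intervalIntegrable _ _
    rw [intervalIntegral.integral_eq_sub_of_hasDerivAt hD hInt]
    rw [hR0]; ring
  have hVval : V = (4 * π / 3) * (R t rB) ^ 3 := by
    rw [hV, hint1]; ring
  have hVne : V ≠ 0 := by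
    rw [hVval]
    positivity
  -- aI
  have hf1 : ContDiff ℝ 1 (fun ρ => Rt t ρ * (R t ρ) ^ 2) :=
    hRtC1.mul ((hRC.of_le one_le_two).pow 2)
  have hint2 : (∫ r in (0 : ℝ)..rB, deriv (fun ρ => Rt t ρ * (R t ρ) ^ 2) r)
      = Rt t rB * (R t rB) ^ 2 := by
    rw [intervalIntegral.integral_deriv_eq_sub
      (fun x _ => (hf1.differentiable one_ne_zero).differentiableAt)
      ((hf1.continuous_deriv le_rfl).intervalIntegrable _ _)]
    rw [hRt0]; ring
  have haIval : aI = 3 * (Rt t rB / R t rB) := by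
    rw [haI, hint2, hVval]
    field_simp
  -- aII
  have hf2 : ContDiff ℝ 1 (fun ρ => (Rt t ρ) ^ 2 * R t ρ) :=
    (hRtC1.pow 2).mul (hRC.of_le one_le_two)
  have hint3 : (∫ r in (0 : ℝ)..rB, deriv (fun ρ => (Rt t ρ) ^ 2 * R t ρ) r)
      = (Rt t rB) ^ 2 * R t rB := by
    rw [intervalIntegral.integral_deriv_eq_sub
      (fun x _ => (hf2.differentiable one_ne_zero).differentiableAt)
      ((hf2.continuous_deriv le_rfl).intervalIntegrable _ _)]
    rw [hR0]; ring
  have haIIval : aII = 3 * (Rt t rB / R t rB) ^ 2 := by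
    rw [haII, hint3, hVval]
    field_simp
  refine ⟨hVval, haIval, haIIval, ?_⟩
  rw [hQB, haIval, haIIval]; ring
end
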